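/- (Pool Adjacent Violators guarantee.) Let (p₁, y₁), …, (p_m, y_m) ∈ [0,1] × {0,1} be a finite sequence of prediction–outcome pairs. Then there exists a single nondecreasing function κ̂ ∈ M₊ such that for every proper loss ℓ ∈ L* and every κ ∈ M₊: Σ_{i=1}^m ℓ(κ̂(pᵢ), yᵢ) ≤ Σ_{i=1}^m ℓ(κ(pᵢ), yᵢ). In other words, one monotone post-processing simultaneously minimizes the empirical loss over all monotone post-processings for every proper loss. -/

import Mathlib

open MeasureTheory Set

noncomputable section

/-- Expected loss of prediction `p` when the outcome is `y ~ Bernoulli(q)`: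
`ℓ(p,q) = q·ℓ(p,1) + (1−q)·ℓ(p,0)`. -/
def elos (ℓ : ℝ → ℝ → ℝ) (p q : ℝ) : ℝ := q * ℓ p 1 + (1 - q) * ℓ p 0

/-- A loss is proper if truthful prediction minimizes expected loss. -/
def IsProper (ℓ : ℝ → ℝ → ℝ) : Prop :=
  ∀ p ∈ Icc (0:ℝ) 1, ∀ q ∈ Icc (0:ℝ) 1, elos ℓ q q ≤ elos ℓ p q

/-- The class `L*` of proper losses with `|ℓ(p,1) − ℓ(p,0)| ≤ 1`. -/
def Lstar (ℓ : ℝ → ℝ → ℝ) : Prop :=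
  IsProper ℓ ∧ ∀ p ∈ Icc (0:ℝ) 1, |ℓ p 1 - ℓ p 0| ≤ 1

/-- Projection onto `[0,1]`. -/
def proj01 (x : ℝ) : ℝ := max 0 (min 1 x)

/-- Calibration decision loss of `J` relative to the post-processing class `K`:
`sup` over `ℓ ∈ L*` and `κ ∈ K` of `E[ℓ(p,y) − ℓ(κ(p),y)]`. -/
def CDL (K : Set (ℝ → ℝ)) (J : Measure (ℝ × ℝ)) : ℝ :=
  sSup { x | ∃ ℓ κ, Lstar ℓ ∧ κ ∈ K ∧
    x = ∫ z, (ℓ z.1 z.2 - ℓ (κ z.1) z.2) ∂J }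

/-- `sign_s(t)`: `+1` if `t > 0`, `−1` if `t < 0`, and `s` if `t = 0`. -/
def signS (s t : ℝ) : ℝ := if 0 < t then 1 else if t < 0 then -1 else s

/-- `sign₊ = sign_{+1}`. -/
def signP (t : ℝ) : ℝ := signS 1 t

/-- The V-shaped loss `ℓ_{v,s}(p,y) = −sign_s(p−v)·(y−v)`. -/
def vloss (v s : ℝ) : ℝ → ℝ → ℝ := fun p y => -(signS s (p - v)) * (y - v)

/-- A valid post-processing class: maps `[0,1]` to `[0,1]`, contains the identity, and
is translation invariant. -/
def ValidClass (K : Set (ℝ → ℝ)) : Prop :=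
  (∀ κ ∈ K, ∀ p ∈ Icc (0:ℝ) 1, κ p ∈ Icc (0:ℝ) 1) ∧
  ((fun p : ℝ => p) ∈ K) ∧
  (∀ s t : ℝ, ∀ κ ∈ K, (fun p : ℝ => proj01 (κ (proj01 (p + s)) + t)) ∈ K)

/-- Upper thresholds of a post-processing class. -/
def thr (K : Set (ℝ → ℝ)) : Set (ℝ → ℝ) :=
  { w | ∃ κ ∈ K, w = fun p => signP (κ p - 1/2) }

/-- Modified thresholds: `thr(K)` together with all lower thresholds of the identity. -/
def thr' (K : Set (ℝ → ℝ)) : Set (ℝ → ℝ) :=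
  thr K ∪ { w | ∃ v : ℝ, w = fun p => -signP (p - v) }

/-- Weight-restricted calibration error `CE_W(J) = sup_{w ∈ W} E[w(p)(y − p)]`. -/
def CE (W : Set (ℝ → ℝ)) (J : Measure (ℝ × ℝ)) : ℝ :=
  sSup { x | ∃ w ∈ W, x = ∫ z, w z.1 * (z.2 - z.1) ∂J }

/-- A probability distribution on `[0,1] × {0,1}`. -/
def IsPredDist (J : Measure (ℝ × ℝ)) : Prop :=
  IsProbabilityMeasure J ∧ ∀ᵐ z ∂J, z.1 ∈ Icc (0:ℝ) 1 ∧ (z.2 = 0 ∨ z.2 = 1)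

/-- The class `M₊` of nondecreasing post-processings `[0,1] → [0,1]`. -/
def Mplus : Set (ℝ → ℝ) :=
  { κ | (∀ p ∈ Icc (0:ℝ) 1, κ p ∈ Icc (0:ℝ) 1) ∧ MonotoneOn κ (Icc (0:ℝ) 1) }

namespace PavAux

noncomputable def dl (ℓ : ℝ → ℝ → ℝ) (p : ℝ) : ℝ := ℓ p 1 - ℓ p 0

noncomputable def gval (ℓ : ℝ → ℝ → ℝ) (c : ℝ) (x : ℝ × ℝ) : ℝ :=
  x.2 * ℓ c 1 + (x.1 - x.2) * ℓ c 0

noncomputable def phi (ℓ : ℝ → ℝ → ℝ) (L : List (ℝ × ℝ)) (c : List ℝ) : ℝ :=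
  ((L.zip c).map (fun x => gval ℓ x.2 x.1)).sum

lemma proper_key {ℓ} (h : IsProper ℓ) {a q : ℝ} (ha : a ∈ Icc (0:ℝ) 1) (hq : q ∈ Icc (0:ℝ) 1) :
    ℓ q 0 + q * dl ℓ q ≤ ℓ a 0 + q * dl ℓ a := by
  have := h a ha q hq
  unfold elos at this; unfold dl; nlinarith [this]

lemma dl_anti {ℓ} (h : IsProper ℓ) {a b : ℝ} (ha : a ∈ Icc (0:ℝ) 1) (hb : b ∈ Icc (0:ℝ) 1)
    (hab : a ≤ b) : dl ℓ b ≤ dl ℓ a := by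
  rcases eq_or_lt_of_le hab with rfl | hlt
  · exact le_refl _
  · have h1 := proper_key h ha hb
    have h2 := proper_key h hb ha
    nlinarith [h1, h2, hlt]

lemma sum_map_add {α : Type*} (l : List α) (f g : α → ℝ) :
    (l.map (fun x => f x + g x)).sum = (l.map f).sum + (l.map g).sum := by
  induction l with
  | nil => simp
  | cons x l ih => simp [ih]; ring

lemma abel_aux : ∀ (e : List (ℝ × ℝ)) (s D : ℝ), 0 ≤ s → (∀ x ∈ e, x.2 ≤ D) →
    e.Pairwise (fun a b => b.2 ≤ a.2) →
    (∀ k, 0 ≤ s + ((e.take k).map Prod.fst).sum) →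
    s + (e.map Prod.fst).sum = 0 →
    0 ≤ s * D + (e.map (fun x => x.1 * x.2)).sum := by
  intro e
  induction e with
  | nil =>
    intro s D hs _ _ _ htot
    simp only [List.map_nil, List.sum_nil, add_zero] at htot ⊢
    simp [htot]
  | cons x e ih =>
    intro s D hs hD hpw hpre htot
    have hs' : 0 ≤ s + x.1 := by
      have := hpre 1
      simpa [add_assoc] using this
    have hpc := List.pairwise_cons.mp hpw
    have hpre' : ∀ k, 0 ≤ (s + x.1) + ((e.take k).map Prod.fst).sum := by
      intro k
      have := hpre (k+1)
      simpa [List.take_succ_cons, add_assoc] using this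
    have htot' : (s + x.1) + (e.map Prod.fst).sum = 0 := by
      simp only [List.map_cons, List.sum_cons] at htot
      linarith
    have hrec := ih (s + x.1) x.2 hs' hpc.1 hpc.2 hpre' htot'
    have hxD : x.2 ≤ D := hD x (by simp)
    simp only [List.map_cons, List.sum_cons]
    nlinarith [hrec, mul_nonneg hs (sub_nonneg.mpr hxD)]

lemma sum_map_mul {α : Type} (l : List α) (f : α → ℝ) (c : ℝ) :
    (l.map (fun x => c * f x)).sum = c * (l.map f).sum := by
  induction l with
  | nil => simp
  | cons a l ih => simp [ih]; ring

lemma sum_map_sub {α : Type} (l : List α) (f g : α → ℝ) :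
    (l.map (fun x => f x - g x)).sum = (l.map f).sum - (l.map g).sum := by
  induction l with
  | nil => simp
  | cons a l ih => simp [ih]; ring

lemma block_lemma (ℓ : ℝ → ℝ → ℝ) (hl : Lstar ℓ) (μ : ℝ) (hμ : μ ∈ Icc (0:ℝ) 1)
    (u : List ((ℝ × ℝ) × ℝ))
    (hW : ∀ x ∈ u, 0 ≤ x.1.1)
    (hc : ∀ x ∈ u, x.2 ∈ Icc (0:ℝ) 1)
    (hmono : u.Pairwise (fun a b => a.2 ≤ b.2))
    (hpre : ∀ k, μ * ((u.take k).map (fun x => x.1.1)).sum ≤ ((u.take k).map (fun x => x.1.2)).sum)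
    (htot : (u.map (fun x => x.1.2)).sum = μ * (u.map (fun x => x.1.1)).sum) :
    (u.map (fun x => gval ℓ μ x.1)).sum ≤ (u.map (fun x => gval ℓ x.2 x.1)).sum := by
  -- the "excess" e-list for Abel
  set e : List (ℝ × ℝ) := u.map (fun x => (x.1.2 - μ * x.1.1, dl ℓ x.2 - dl ℓ μ)) with he
  have hdl1 : |dl ℓ μ| ≤ 1 := hl.2 μ hμ
  have habel : 0 ≤ (0:ℝ) * 2 + (e.map (fun x => x.1 * x.2)).sum := by
    apply abel_aux e 0 2 le_rfl
    · intro z hz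
      rw [he] at hz
      obtain ⟨x, hx, rfl⟩ := List.mem_map.mp hz
      have h2 : |dl ℓ x.2| ≤ 1 := hl.2 x.2 (hc x hx)
      have := abs_le.mp h2
      have := abs_le.mp hdl1
      simp only
      linarith [this.1, this.2, (abs_le.mp h2).1, (abs_le.mp h2).2]
    · rw [he, List.pairwise_map]
      refine hmono.imp_of_mem ?_
      intro a b ha hb hab
      have : dl ℓ b.2 ≤ dl ℓ a.2 := dl_anti hl.1 (hc a ha) (hc b hb) hab
      simp only
      linarith
    · intro k
      rw [he, ← List.map_take, List.map_map]
      have : (Prod.fst ∘ fun x : (ℝ × ℝ) × ℝ => (x.1.2 - μ * x.1.1, dl ℓ x.2 - dl ℓ μ))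
          = fun x : (ℝ × ℝ) × ℝ => x.1.2 - μ * x.1.1 := rfl
      rw [this]
      have hsub := sum_map_sub (u.take k) (fun x => x.1.2) (fun x => μ * x.1.1)
      have hmul := sum_map_mul (u.take k) (fun x => x.1.1) μ
      rw [hsub, hmul]
      linarith [hpre k]
    · rw [he, List.map_map]
      have : (Prod.fst ∘ fun x : (ℝ × ℝ) × ℝ => (x.1.2 - μ * x.1.1, dl ℓ x.2 - dl ℓ μ))
          = fun x : (ℝ × ℝ) × ℝ => x.1.2 - μ * x.1.1 := rfl
      rw [this]
      have hsub := sum_map_sub u (fun x => x.1.2) (fun x => μ * x.1.1)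
      have hmul := sum_map_mul u (fun x => x.1.1) μ
      rw [hsub, hmul]
      linarith [htot]
  -- termwise bound
  have hterm : ∀ x ∈ u, gval ℓ μ x.1 + (x.1.2 - μ * x.1.1) * (dl ℓ x.2 - dl ℓ μ)
      ≤ gval ℓ x.2 x.1 := by
    intro x hx
    have hp := proper_key hl.1 (hc x hx) hμ
    have hw := hW x hx
    have := mul_le_mul_of_nonneg_left hp hw
    unfold gval dl at *
    nlinarith [this]
  calc (u.map (fun x => gval ℓ μ x.1)).sum
      ≤ (u.map (fun x => gval ℓ μ x.1)).sum + (e.map (fun x => x.1 * x.2)).sum := by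
        linarith [habel]
    _ = (u.map (fun x => gval ℓ μ x.1 + (x.1.2 - μ * x.1.1) * (dl ℓ x.2 - dl ℓ μ))).sum := by
        rw [he, List.map_map]
        rw [sum_map_add u (fun x => gval ℓ μ x.1) (fun x => (x.1.2 - μ * x.1.1) * (dl ℓ x.2 - dl ℓ μ))]
        rfl
    _ ≤ (u.map (fun x => gval ℓ x.2 x.1)).sum := List.sum_le_sum hterm

/-- prefix weight sum -/
noncomputable def SWf (L : List (ℝ × ℝ)) (k : ℕ) : ℝ := ((L.take k).map Prod.fst).sum
/-- prefix label sum -/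
noncomputable def SAf (L : List (ℝ × ℝ)) (k : ℕ) : ℝ := ((L.take k).map Prod.snd).sum

lemma SWf_pos (L : List (ℝ × ℝ)) (h : ∀ x ∈ L, 0 < x.1) {k : ℕ} (hk1 : 1 ≤ k)
    (hk : k ≤ L.length) : 0 < SWf L k := by
  apply List.sum_pos
  · intro x hx
    obtain ⟨w, hw, rfl⟩ := List.mem_map.mp hx
    exact h w (List.mem_of_mem_take hw)
  · simp only [ne_eq, List.map_eq_nil_iff]
    intro hcon
    have h2 := congrArg List.length hcon
    rw [List.length_take] at h2
    simp only [List.length_nil] at h2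
    omega

lemma SAf_nonneg (L : List (ℝ × ℝ)) (h : ∀ x ∈ L, 0 ≤ x.2) (k : ℕ) : 0 ≤ SAf L k := by
  apply List.sum_nonneg
  intro x hx
  obtain ⟨w, hw, rfl⟩ := List.mem_map.mp hx
  exact h w (List.mem_of_mem_take hw)

lemma SAf_le_SWf (L : List (ℝ × ℝ)) (h : ∀ x ∈ L, x.2 ≤ x.1) (k : ℕ) : SAf L k ≤ SWf L k :=
  List.sum_le_sum (fun x hx => h x (List.mem_of_mem_take hx))

lemma SWf_stable (L : List (ℝ × ℝ)) {k : ℕ} (hk : L.length ≤ k) : SWf L k = SWf L L.length := by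
  unfold SWf
  rw [List.take_of_length_le hk, List.take_of_length_le le_rfl]

lemma SAf_stable (L : List (ℝ × ℝ)) {k : ℕ} (hk : L.length ≤ k) : SAf L k = SAf L L.length := by
  unfold SAf
  rw [List.take_of_length_le hk, List.take_of_length_le le_rfl]

lemma SWf_add (L : List (ℝ × ℝ)) (b k : ℕ) : SWf L (b + k) = SWf L b + SWf (L.drop b) k := by
  unfold SWf
  rw [List.take_add, List.map_append, List.sum_append]

lemma SAf_add (L : List (ℝ × ℝ)) (b k : ℕ) : SAf L (b + k) = SAf L b + SAf (L.drop b) k := by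
  unfold SAf
  rw [List.take_add, List.map_append, List.sum_append]

lemma pav_exists : ∀ (n : ℕ) (L : List (ℝ × ℝ)), L.length = n →
    (∀ x ∈ L, 0 < x.1 ∧ 0 ≤ x.2 ∧ x.2 ≤ x.1) →
    ∃ v : List ℝ, v.length = L.length ∧ (∀ x ∈ v, x ∈ Icc (0:ℝ) 1) ∧
      v.Pairwise (· ≤ ·) ∧
      (∀ μ' : ℝ, (∀ k, μ' * SWf L k ≤ SAf L k) → ∀ x ∈ v, μ' ≤ x) ∧
      (∀ ℓ, Lstar ℓ → ∀ c : List ℝ, c.length = L.length → (∀ x ∈ c, x ∈ Icc (0:ℝ) 1) →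
        c.Pairwise (· ≤ ·) → phi ℓ L v ≤ phi ℓ L c) := by
  intro n
  induction n using Nat.strong_induction_on with
  | _ n ih =>
  intro L hlen hL
  rcases eq_or_ne L [] with rfl | hne
  · refine ⟨[], rfl, by simp, List.Pairwise.nil, by simp, ?_⟩
    intro ℓ _ c _ _ _
    simp [phi]
  · have npos : 0 < n := hlen ▸ List.length_pos_iff.mpr hne
    obtain ⟨b, hbmem, hbmin⟩ := Finset.exists_min_image (Finset.Icc 1 n)
      (fun k => SAf L k / SWf L k) ⟨1, Finset.mem_Icc.mpr ⟨le_rfl, npos⟩⟩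
    obtain ⟨hb1, hbn⟩ := Finset.mem_Icc.mp hbmem
    set μ : ℝ := SAf L b / SWf L b with hμdef
    have hSWpos : ∀ k, 1 ≤ k → k ≤ n → 0 < SWf L k := fun k h1 h2 =>
      SWf_pos L (fun x hx => (hL x hx).1) h1 (by omega)
    have hSWb : 0 < SWf L b := hSWpos b hb1 hbn
    have hμW : μ * SWf L b = SAf L b := div_mul_cancel₀ _ (ne_of_gt hSWb)
    have hμ0 : 0 ≤ μ := div_nonneg (SAf_nonneg L (fun x hx => (hL x hx).2.1) b) hSWb.le
    have hμ1 : μ ≤ 1 := (div_le_one hSWb).mpr (SAf_le_SWf L (fun x hx => (hL x hx).2.2) b)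
    have hpre_all : ∀ k, μ * SWf L k ≤ SAf L k := by
      intro k
      rcases Nat.eq_zero_or_pos k with rfl | hk1
      · simp [SWf, SAf]
    -- case k ≥ 1
      rcases le_or_gt k n with hkn | hkn
      · have hmin := hbmin k (Finset.mem_Icc.mpr ⟨hk1, hkn⟩)
        have hSWk := hSWpos k hk1 hkn
        calc μ * SWf L k ≤ (SAf L k / SWf L k) * SWf L k :=
              mul_le_mul_of_nonneg_right hmin hSWk.le
          _ = SAf L k := div_mul_cancel₀ _ (ne_of_gt hSWk)
      · have h1 : L.length ≤ k := by omega
        rw [SWf_stable L h1, SAf_stable L h1, hlen]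
        have hmin := hbmin n (Finset.mem_Icc.mpr ⟨npos, le_rfl⟩)
        have hSWn := hSWpos n npos le_rfl
        calc μ * SWf L n ≤ (SAf L n / SWf L n) * SWf L n :=
              mul_le_mul_of_nonneg_right hmin hSWn.le
          _ = SAf L n := div_mul_cancel₀ _ (ne_of_gt hSWn)
    -- recurse on the rest
    have hlen' : (L.drop b).length = n - b := by simp [hlen]
    have hL' : ∀ x ∈ L.drop b, 0 < x.1 ∧ 0 ≤ x.2 ∧ x.2 ≤ x.1 :=
      fun x hx => hL x (List.mem_of_mem_drop hx)
    obtain ⟨v', hv'len, hv'01, hv'pair, hv'lb, hv'opt⟩ :=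
      ih (n - b) (by omega) (L.drop b) hlen' hL'
    have hpreL' : ∀ k, μ * SWf (L.drop b) k ≤ SAf (L.drop b) k := by
      intro k
      have h1 := hpre_all (b + k)
      rw [SWf_add, SAf_add] at h1
      nlinarith [h1, hμW]
    have hμlb : ∀ x ∈ v', μ ≤ x := hv'lb μ hpreL'
    refine ⟨List.replicate b μ ++ v', ?_, ?_, ?_, ?_, ?_⟩
    · simp [hv'len, hlen', hlen]; omega
    · intro x hx
      rcases List.mem_append.mp hx with h | h
      · rw [List.eq_of_mem_replicate h]; exact ⟨hμ0, hμ1⟩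
      · exact hv'01 x h
    · refine List.pairwise_append.mpr ⟨?_, hv'pair, ?_⟩
      · exact List.pairwise_replicate.mpr (Or.inr le_rfl)
      · intro x hx y hy
        rw [List.eq_of_mem_replicate hx]
        exact hμlb y hy
    · intro μ' hμ' x hx
      have hμ'μ : μ' ≤ μ := by
        have h1 := hμ' b
        rw [← hμW] at h1
        exact le_of_mul_le_mul_right h1 hSWb
      rcases List.mem_append.mp hx with h | h
      · rw [List.eq_of_mem_replicate h]; exact hμ'μ
      · exact hμ'μ.trans (hμlb x h)
    · intro ℓ hl c hclen hc01 hcpair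
      have hl1len : (L.take b).length = b := by simp [hlen]; omega
      have hc1len : (c.take b).length = b := by simp [hclen, hlen]; omega
      -- split the zips
      have hzc : L.zip c = (L.take b).zip (c.take b) ++ (L.drop b).zip (c.drop b) := by
        calc L.zip c = (L.take b ++ L.drop b).zip (c.take b ++ c.drop b) := by
              rw [List.take_append_drop, List.take_append_drop]
          _ = (L.take b).zip (c.take b) ++ (L.drop b).zip (c.drop b) :=
              List.zip_append (by rw [hl1len, hc1len])
      have hzv : L.zip (List.replicate b μ ++ v') =
          (L.take b).zip (List.replicate b μ) ++ (L.drop b).zip v' := by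
        calc L.zip (List.replicate b μ ++ v')
            = (L.take b ++ L.drop b).zip (List.replicate b μ ++ v') := by
              rw [List.take_append_drop]
          _ = (L.take b).zip (List.replicate b μ) ++ (L.drop b).zip v' :=
              List.zip_append (by rw [hl1len, List.length_replicate])
      have hphic : phi ℓ L c = phi ℓ (L.take b) (c.take b) + phi ℓ (L.drop b) (c.drop b) := by
        unfold phi; rw [hzc, List.map_append, List.sum_append]
      have hphiv : phi ℓ L (List.replicate b μ ++ v') =
          phi ℓ (L.take b) (List.replicate b μ) + phi ℓ (L.drop b) v' := by
        unfold phi; rw [hzv, List.map_append, List.sum_append]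
      -- IH optimality on the tail
      have htail : phi ℓ (L.drop b) v' ≤ phi ℓ (L.drop b) (c.drop b) := by
        apply hv'opt ℓ hl
        · simp [hclen, hlen]
        · exact fun x hx => hc01 x (List.mem_of_mem_drop hx)
        · exact hcpair.sublist (List.drop_sublist b c)
      -- block lemma on the head
      set u : List ((ℝ × ℝ) × ℝ) := (L.take b).zip (c.take b) with hu
      have hulen : u.length = b := by simp [hu, hl1len, hc1len]
      have humapfst : u.map Prod.fst = L.take b :=
        List.map_fst_zip (by rw [hl1len, hc1len])
      have hheadc : phi ℓ (L.take b) (c.take b) = (u.map (fun x => gval ℓ x.2 x.1)).sum := rfl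
      have hmapW : u.map (fun x => x.1.1) = (L.take b).map Prod.fst := by
        have : (fun x : (ℝ × ℝ) × ℝ => x.1.1) = Prod.fst ∘ Prod.fst := rfl
        rw [this, ← List.map_map, humapfst]
      have hmapA : u.map (fun x => x.1.2) = (L.take b).map Prod.snd := by
        have : (fun x : (ℝ × ℝ) × ℝ => x.1.2) = Prod.snd ∘ Prod.fst := rfl
        rw [this, ← List.map_map, humapfst]
      have hheadv : phi ℓ (L.take b) (List.replicate b μ) =
          (u.map (fun x => gval ℓ μ x.1)).sum := by
        unfold phi
        congr 1
        apply List.ext_getElem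
        · simp [hu, hl1len, hc1len]
        · intro i h1 h2
          simp only [List.getElem_map, List.getElem_zip, List.getElem_replicate, hu]
      have hblock : (u.map (fun x => gval ℓ μ x.1)).sum ≤ (u.map (fun x => gval ℓ x.2 x.1)).sum := by
        apply block_lemma ℓ hl μ ⟨hμ0, hμ1⟩ u
        · intro x hx
          obtain ⟨a, d⟩ := x
          have := (List.of_mem_zip hx).1
          exact (hL a (List.mem_of_mem_take this)).1.le
        · intro x hx
          obtain ⟨a, d⟩ := x
          have := (List.of_mem_zip hx).2
          exact hc01 d (List.mem_of_mem_take this)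
        · rw [List.pairwise_iff_getElem]
          intro i j h1 h2 hij
          have hcp : (c.take b).Pairwise (· ≤ ·) := hcpair.sublist (List.take_sublist b c)
          have h1' : i < (c.take b).length := by rw [hc1len]; rw [hulen] at h1; exact h1
          have h2' : j < (c.take b).length := by rw [hc1len]; rw [hulen] at h2; exact h2
          have := (List.pairwise_iff_getElem.mp hcp) i j h1' h2' hij
          simp only [hu, List.getElem_zip]
          exact this
        · intro k
          have e1 : (u.take k).map (fun x => x.1.1) = (L.take (min k b)).map Prod.fst := by
            rw [List.map_take, hmapW, ← List.map_take, List.take_take]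
          have e2 : (u.take k).map (fun x => x.1.2) = (L.take (min k b)).map Prod.snd := by
            rw [List.map_take, hmapA, ← List.map_take, List.take_take]
          rw [e1, e2]
          have := hpre_all (min k b)
          simpa [SWf, SAf] using this
        · rw [hmapW, hmapA]
          have := hμW
          simp only [SWf, SAf] at this
          linarith
      rw [hphic, hphiv, hheadv, hheadc]
      linarith [htail, hblock]

end PavAux

/-- Pool Adjacent Violators guarantee: a single monotone post-processing
simultaneously minimizes the empirical loss over all monotone post-processings, for
every proper loss. -/
theorem pav_omniprediction (m : ℕ) (p y : Fin m → ℝ)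
    (hp : ∀ i, p i ∈ Icc (0:ℝ) 1) (hy : ∀ i, y i = 0 ∨ y i = 1) :
    ∃ κhat ∈ Mplus, ∀ ℓ : ℝ → ℝ → ℝ, Lstar ℓ → ∀ κ ∈ Mplus,
      ∑ i, ℓ (κhat (p i)) (y i) ≤ ∑ i, ℓ (κ (p i)) (y i) := by
  
  classical
  set T : Finset ℝ := Finset.image p Finset.univ with hT
  set qs : List ℝ := T.sort (· ≤ ·) with hqs
  have hqsort : qs.Pairwise (· < ·) := (Finset.sortedLT_sort T).pairwise
  have hqpairlt : qs.Pairwise (· < ·) := hqsort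
  have hmemT : ∀ t, t ∈ qs ↔ t ∈ T := fun t => Finset.mem_sort _
  set Wf : ℝ → ℝ := fun t => ((Finset.univ.filter (fun i => p i = t)).card : ℝ) with hWf
  set Af : ℝ → ℝ := fun t => ∑ i ∈ Finset.univ.filter (fun i => p i = t), y i with hAf
  set L : List (ℝ × ℝ) := qs.map (fun t => (Wf t, Af t)) with hLdef
  have hqIcc : ∀ t ∈ qs, t ∈ Icc (0:ℝ) 1 := by
    intro t ht
    obtain ⟨i, _, rfl⟩ := Finset.mem_image.mp ((hmemT t).mp ht)
    exact hp i
  have hy01 : ∀ i, 0 ≤ y i ∧ y i ≤ 1 := by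
    intro i; rcases hy i with h | h <;> rw [h] <;> norm_num
  have hL : ∀ x ∈ L, 0 < x.1 ∧ 0 ≤ x.2 ∧ x.2 ≤ x.1 := by
    intro x hx
    obtain ⟨t, ht, rfl⟩ := List.mem_map.mp hx
    obtain ⟨i, _, rfl⟩ := Finset.mem_image.mp ((hmemT t).mp ht)
    refine ⟨?_, ?_, ?_⟩
    · have hi : i ∈ Finset.univ.filter (fun j => p j = p i) := by simp
      simp only [hWf]
      exact_mod_cast Nat.cast_pos.mpr (Finset.card_pos.mpr ⟨i, hi⟩)
    · simp only [hAf]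
      exact Finset.sum_nonneg (fun j _ => (hy01 j).1)
    · simp only [hWf, hAf]
      calc ∑ j ∈ Finset.univ.filter (fun j => p j = p i), y j
          ≤ ∑ j ∈ Finset.univ.filter (fun j => p j = p i), (1:ℝ) :=
            Finset.sum_le_sum (fun j _ => (hy01 j).2)
        _ = _ := by simp
  obtain ⟨v, hvlen, hv01, hvpair, _, hvopt⟩ := PavAux.pav_exists L.length L rfl hL
  have hvlenq : v.length = qs.length := by rw [hvlen, hLdef, List.length_map]
  -- index function
  set idx : ℝ → ℕ := fun t => (qs.filter (fun u => decide (u ≤ t))).length with hidx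
  have hidx_le : ∀ t, idx t ≤ qs.length := fun t => List.length_filter_le _ _
  have hidx_mono : ∀ s t : ℝ, s ≤ t → idx s ≤ idx t := by
    intro s t hst
    exact List.Sublist.length_le (List.monotone_filter_right qs
      (fun a ha => by simp only [decide_eq_true_eq] at ha ⊢; exact ha.trans hst))
  have hidx_val : ∀ (j : ℕ) (hj : j < qs.length), idx (qs[j]) = j + 1 := by
    intro j hj
    show (qs.filter (fun u => decide (u ≤ qs[j]))).length = j + 1
    have key : ∀ t : ℝ, (qs.take (j+1)).filter (fun u => decide (u ≤ t)) = qs.take (j+1) →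
        (qs.drop (j+1)).filter (fun u => decide (u ≤ t)) = [] →
        (qs.filter (fun u => decide (u ≤ t))).length = j + 1 := by
      intro t h1 h2
      conv_lhs => rw [← List.take_append_drop (j+1) qs]
      rw [List.filter_append, h1, h2, List.append_nil, List.length_take]
      omega
    apply key qs[j]
    · apply List.filter_eq_self.mpr
      intro a ha
      obtain ⟨i, hi, rfl⟩ := List.mem_iff_getElem.mp ha
      have hi' : i < qs.length := lt_of_lt_of_le hi (by rw [List.length_take]; omega)
      have hgt : (qs.take (j+1))[i] = qs[i] := List.getElem_take
      rw [hgt]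
      simp only [decide_eq_true_eq]
      have hij : i ≤ j := by
        have := hi; rw [List.length_take] at this; omega
      rcases eq_or_lt_of_le hij with rfl | hlt
      · exact le_rfl
      · exact (List.pairwise_iff_getElem.mp hqpairlt i j hi' hj hlt).le
    · apply List.filter_eq_nil_iff.mpr
      intro a ha
      obtain ⟨i, hi, rfl⟩ := List.mem_iff_getElem.mp ha
      have hlen2 : j+1+i < qs.length := by
        have := hi; rw [List.length_drop] at this; omega
      have hgt : (qs.drop (j+1))[i] = qs[j+1+i] := List.getElem_drop
      rw [hgt]
      simp only [decide_eq_true_eq, not_le]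
      exact List.pairwise_iff_getElem.mp hqpairlt j (j+1+i) hj hlen2 (by omega)
  have hvmono : ∀ (i j : ℕ) (hi : i < v.length) (hj : j < v.length), i ≤ j → v[i] ≤ v[j] := by
    intro i j hi hj hij
    rcases eq_or_lt_of_le hij with rfl | hlt
    · exact le_rfl
    · exact List.pairwise_iff_getElem.mp hvpair i j hi hj hlt
  -- the fitted monotone map
  set κh : ℝ → ℝ := fun t => v.getD (idx t - 1) 0 with hκh
  have hκh_eval : ∀ (j : ℕ) (hj : j < qs.length), κh (qs[j]) = v[j]'(by omega) := by
    intro j hj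
    simp only [hκh]
    rw [hidx_val j hj]
    simp only [Nat.add_sub_cancel]
    exact List.getD_eq_getElem v 0 (by omega)
  have hmapκh : qs.map κh = v := by
    apply List.ext_getElem (by rw [List.length_map, hvlenq])
    intro j h1 h2
    rw [List.getElem_map]
    exact hκh_eval j (by rwa [List.length_map] at h1)
  have hκh01 : ∀ t : ℝ, κh t ∈ Icc (0:ℝ) 1 := by
    intro t
    rcases eq_or_ne v [] with hv | hv
    · simp [hκh, hv]
    · have hvpos : 0 < v.length := List.length_pos_iff.mpr hv
      have hlt : idx t - 1 < v.length := by
        have := hidx_le t; rw [← hvlenq] at this; omega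
      rw [hκh]
      simp only
      rw [List.getD_eq_getElem v 0 hlt]
      exact hv01 _ (List.getElem_mem hlt)
  have hκhmono : ∀ s t : ℝ, s ≤ t → κh s ≤ κh t := by
    intro s t hst
    rcases eq_or_ne v [] with hv | hv
    · simp [hκh, hv]
    · have hvpos : 0 < v.length := List.length_pos_iff.mpr hv
      have hls : idx s - 1 < v.length := by have := hidx_le s; rw [← hvlenq] at this; omega
      have hlt : idx t - 1 < v.length := by have := hidx_le t; rw [← hvlenq] at this; omega
      rw [hκh]
      simp only
      rw [List.getD_eq_getElem v 0 hls, List.getD_eq_getElem v 0 hlt]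
      exact hvmono _ _ hls hlt (by have := hidx_mono s t hst; omega)
  refine ⟨κh, ⟨fun t _ => hκh01 t, fun a _ b _ hab => hκhmono a b hab⟩, ?_⟩
  intro ℓ hl κ hκ
  have hconv : ∀ κ0 : ℝ → ℝ, ∑ i, ℓ (κ0 (p i)) (y i) = PavAux.phi ℓ L (qs.map κ0) := by
    intro κ0
    have h1 : ∑ i, ℓ (κ0 (p i)) (y i)
        = ∑ t ∈ T, ∑ i ∈ Finset.univ.filter (fun i => p i = t), ℓ (κ0 (p i)) (y i) :=
      (Finset.sum_fiberwise_of_maps_to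
        (fun i _ => Finset.mem_image_of_mem p (Finset.mem_univ i)) _).symm
    rw [h1]
    have h2 : ∀ t ∈ T, ∑ i ∈ Finset.univ.filter (fun i => p i = t), ℓ (κ0 (p i)) (y i)
        = PavAux.gval ℓ (κ0 t) (Wf t, Af t) := by
      intro t _
      have hstep : ∀ i ∈ Finset.univ.filter (fun i => p i = t),
          ℓ (κ0 (p i)) (y i) = y i * ℓ (κ0 t) 1 + (1 - y i) * ℓ (κ0 t) 0 := by
        intro i hi
        have hpi : p i = t := (Finset.mem_filter.mp hi).2
        rcases hy i with h0 | h0 <;> rw [hpi, h0] <;> ring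
      rw [Finset.sum_congr rfl hstep, Finset.sum_add_distrib, ← Finset.sum_mul, ← Finset.sum_mul]
      have hsub : ∑ i ∈ Finset.univ.filter (fun i => p i = t), (1 - y i) = Wf t - Af t := by
        rw [Finset.sum_sub_distrib, Finset.sum_const, nsmul_eq_mul, mul_one]
      rw [hsub]
      rfl
    rw [Finset.sum_congr rfl h2]
    have h3 : ∑ t ∈ T, PavAux.gval ℓ (κ0 t) (Wf t, Af t)
        = (qs.map (fun t => PavAux.gval ℓ (κ0 t) (Wf t, Af t))).sum := by
      rw [← Finset.sum_map_toList]
      exact (List.Perm.sum_eq (List.Perm.map _ (Finset.sort_perm_toList (s := T) (r := (· ≤ ·))))).symm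
    rw [h3]
    unfold PavAux.phi
    have h4 : L.zip (qs.map κ0) = qs.map (fun t => ((Wf t, Af t), κ0 t)) := by
      rw [hLdef]; exact List.zip_map'
    rw [h4, List.map_map]
    rfl
  rw [hconv κh, hconv κ, hmapκh]
  apply hvopt ℓ hl
  · rw [List.length_map, hLdef, List.length_map]
  · intro x hx
    obtain ⟨t, ht, rfl⟩ := List.mem_map.mp hx
    exact hκ.1 t (hqIcc t ht)
  · rw [List.pairwise_map]
    refine hqpairlt.imp_of_mem ?_
    intro a b ha hb hab
    exact hκ.2 (hqIcc a ha) (hqIcc b hb) hab.le
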